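/- In a simple game (finite perfect-information game, no player moves twice on a path, no payoff ties), let s_i be a strategy of player i that chooses a non-backward-induction action at some decision node of i that is one step away from the terminal nodes (i.e., all of whose children are terminal). Then s_i is weakly dominated in the associated normal form: the strategy s'_i obtained from s_i by switching that node's action to the backward-induction action satisfies u_i(s'_i, s_{-i}) ≥ u_i(s_i, s_{-i}) for all opponent profiles s_{-i}, with strict inequality for some s_{-i}. -/
import Mathlib


/-- Finite extensive-form game trees with perfect information. -/
inductive GTree (ι : Type) where
  | leaf (payoff : ι → ℝ) : GTree ι
  | node (mover : ι) (children : List (GTree ι)) : GTree ι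

/-- Player `i` moves somewhere in the tree. -/
inductive Moves {ι : Type} (i : ι) : GTree ι → Prop where
  | here (ch : List (GTree ι)) : Moves i (.node i ch)
  | there {j : ι} {ch : List (GTree ι)} {t : GTree ι} :
      t ∈ ch → Moves i t → Moves i (.node j ch)

/-- A simple game tree: every decision node has at least one child, and no
player moves more than once along any path. -/
inductive Simple {ι : Type} : GTree ι → Prop where
  | leaf (p : ι → ℝ) : Simple (.leaf p)
  | node {i : ι} {ch : List (GTree ι)} :
      ch ≠ [] → (∀ t ∈ ch, Simple t) → (∀ t ∈ ch, ¬ Moves i t) →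
      Simple (.node i ch)

/-- `p` is the payoff vector at some terminal node of the tree. -/
inductive LeafOf {ι : Type} : (ι → ℝ) → GTree ι → Prop where
  | leaf (p : ι → ℝ) : LeafOf p (.leaf p)
  | node {p : ι → ℝ} {i : ι} {ch : List (GTree ι)} {t : GTree ι} :
      t ∈ ch → LeafOf p t → LeafOf p (.node i ch)

/-- No player is indifferent between any two (distinct) terminal nodes. -/
def NoTies {ι : Type} (t : GTree ι) : Prop :=
  ∀ (i : ι) (p q : ι → ℝ), LeafOf p t → LeafOf q t → p = q ∨ p i ≠ q i

/-- The subtree of `t` at the address (path of child indices) `a`. -/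
def subtreeAt {ι : Type} : GTree ι → List ℕ → Option (GTree ι)
  | t, [] => some t
  | GTree.leaf _, _ :: _ => none
  | GTree.node _ ch, k :: r =>
      match ch[k]? with
      | some c => subtreeAt c r
      | none => none
  termination_by t l => l.length

/-- The player who moves at address `a` of the tree `t`, if any. -/
def moverAt {ι : Type} (t : GTree ι) (a : List ℕ) : Option ι :=
  match subtreeAt t a with
  | some (GTree.node i _) => some i
  | _ => none

/-- `Outcome σ t a p`: playing the (joint) pure strategy profile `σ` — which
assigns a child index to every node address — from the subtree `t` located at
address `a` reaches a terminal node with payoff vector `p`. -/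
inductive Outcome {ι : Type} (σ : List ℕ → ℕ) : GTree ι → List ℕ → (ι → ℝ) → Prop where
  | leaf (p : ι → ℝ) (a : List ℕ) : Outcome σ (.leaf p) a p
  | node {i : ι} {ch : List (GTree ι)} {a : List ℕ} {c : GTree ι} {p : ι → ℝ} :
      ch[σ a]? = some c → Outcome σ c (a ++ [σ a]) p →
      Outcome σ (.node i ch) a p

/-- The joint profile in which player `i` uses `si` at `i`'s decision nodes and
the opponents' profile `sopp` is used everywhere else. -/
def comb {ι : Type} [DecidableEq ι] (t : GTree ι) (i : ι)
    (si sopp : List ℕ → ℕ) : List ℕ → ℕ :=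
  fun a => if moverAt t a = some i then si a else sopp a

lemma subtreeAt_append {ι : Type} (a b : List ℕ) : ∀ (t : GTree ι),
    subtreeAt t (a ++ b) = (subtreeAt t a).bind (fun s => subtreeAt s b) := by
  induction a with
  | nil => intro t; simp [subtreeAt]
  | cons k r ih =>
    intro t
    cases t with
    | leaf p => simp [subtreeAt]
    | node j ch =>
      simp only [List.cons_append, subtreeAt]
      cases h : ch[k]? with
      | none => simp
      | some c => simp [ih c]

lemma moves_of_subtree {ι : Type} (i : ι) : ∀ (rest : List ℕ) (t0 : GTree ι)
    (ch : List (GTree ι)), subtreeAt t0 rest = some (GTree.node i ch) → Moves i t0 := by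
  intro rest
  induction rest with
  | nil =>
    intro t0 ch h
    simp only [subtreeAt, Option.some_inj] at h
    subst h; exact Moves.here ch
  | cons k r ih =>
    intro t0 ch h
    cases t0 with
    | leaf p => simp [subtreeAt] at h
    | node j ch0 =>
      simp only [subtreeAt] at h
      cases hg : ch0[k]? with
      | none => rw [hg] at h; simp at h
      | some c =>
        rw [hg] at h
        exact Moves.there (List.mem_of_getElem? hg) (ih c ch h)

/-- Weak domination part: paired outcomes. -/
lemma aux_le {ι : Type} (t : GTree ι) (i : ι) (adr : List ℕ) (ch : List (GTree ι))
    (hadr : subtreeAt t adr = some (GTree.node i ch))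
    (σ1 σ2 : List ℕ → ℕ) (hag : ∀ b, b ≠ adr → σ1 b = σ2 b)
    (pa pb : ι → ℝ) (h1 : ch[σ1 adr]? = some (GTree.leaf pa))
    (h2 : ch[σ2 adr]? = some (GTree.leaf pb)) (hle : pa i ≤ pb i) :
    ∀ (t0 : GTree ι) (a : List ℕ) (w : ι → ℝ), Outcome σ1 t0 a w →
      ∀ w', Outcome σ2 t0 a w' → subtreeAt t a = some t0 → w i ≤ w' i := by
  intro t0 a w h
  induction h with
  | leaf q a =>
    intro w' h' hsub
    cases h'
    exact le_refl _
  | node hget hout ih =>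
    rename_i j ch0 a c q
    intro w' h' hsub
    cases h' with
    | node hget2 hout2 =>
      rename_i c2 _
      by_cases hA : a = adr
      · subst hA
        rw [hadr] at hsub
        injection hsub with hsub
        injection hsub with hji hch
        subst hji; subst hch
        rw [h1] at hget; injection hget with hget
        rw [h2] at hget2; injection hget2 with hget2
        subst hget; subst hget2
        cases hout; cases hout2
        exact hle
      · have he : σ2 a = σ1 a := (hag a hA).symm
        rw [he] at hget2 hout2
        rw [hget] at hget2; injection hget2 with hget2
        subst hget2
        refine ih w' hout2 ?_
        have := subtreeAt_append a [σ1 a] t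
        rw [hsub] at this
        rw [this]
        simp [subtreeAt, hget]

/-- Existence part: steering towards `adr`. -/
lemma aux_reach {ι : Type} (t : GTree ι) (i : ι) (adr : List ℕ)
    (ch : List (GTree ι)) (q : ι → ℝ) (kk : ℕ)
    (hk : ch[kk]? = some (GTree.leaf q)) (σ : List ℕ → ℕ)
    (hσadr : σ adr = kk)
    (hσ : ∀ (b : List ℕ) (j : ι) (ch0 : List (GTree ι)),
      subtreeAt t b = some (GTree.node j ch0) → j ≠ i → σ b = adr.getD b.length 0) :
    ∀ (rest a : List ℕ) (t0 : GTree ι), Simple t0 → a ++ rest = adr →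
      subtreeAt t a = some t0 → subtreeAt t0 rest = some (GTree.node i ch) →
      Outcome σ t0 a q := by
  intro rest
  induction rest with
  | nil =>
    intro a t0 _ ha _ hsub
    simp only [List.append_nil] at ha
    subst ha
    simp only [subtreeAt, Option.some_inj] at hsub
    subst hsub
    refine Outcome.node (c := GTree.leaf q) ?_ ?_
    · rw [hσadr]; exact hk
    · exact Outcome.leaf q _
  | cons r rest' ih =>
    intro a t0 hsimp ha hsubt hsub
    cases t0 with
    | leaf p => simp [subtreeAt] at hsub
    | node j ch0 =>
      simp only [subtreeAt] at hsub
      cases hg : ch0[r]? with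
      | none => rw [hg] at hsub; simp at hsub
      | some c =>
        rw [hg] at hsub
        have hcmem : c ∈ ch0 := List.mem_of_getElem? hg
        cases hsimp with
        | node hne hall hnom =>
          have hji : j ≠ i := by
            intro hji; subst hji
            exact hnom c hcmem (moves_of_subtree j rest' c ch hsub)
          have hσa : σ a = r := by
            rw [hσ a j ch0 hsubt hji, ← ha]
            have hr : (a ++ r :: rest')[a.length]? = some r := by
              rw [List.getElem?_append_right (le_refl _)]; simp
            simp [List.getD_eq_getElem?_getD, hr]
          refine Outcome.node (c := c) ?_ ?_
          · rw [hσa]; exact hg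
          · rw [hσa]
            refine ih (a ++ [r]) c (hall c hcmem) (by simp [ha]) ?_ hsub
            have := subtreeAt_append a [r] t
            rw [hsubt] at this
            rw [this]
            simp [subtreeAt, hg]

/-- In a simple game, a strategy `si` of player `i` choosing a
non-backward-induction action at a node of `i` all of whose children are
terminal is weakly dominated in the associated normal form by the strategy
`s'i = Function.update si adr k'` that switches to the backward-induction
action `k'` at that node: it does weakly better against every opponent profile
and strictly better against some opponent profile. -/
theorem stmt16 {ι : Type} [DecidableEq ι] (t : GTree ι)
    (hs : Simple t) (hn : NoTies t)
    (i : ι) (adr : List ℕ) (ch : List (GTree ι))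
    (hadr : subtreeAt t adr = some (GTree.node i ch))
    (hterm : ∀ c ∈ ch, ∃ q, c = GTree.leaf q)
    (si : List ℕ → ℕ) (p p' : ι → ℝ) (k' : ℕ)
    (hchoice : ch[si adr]? = some (GTree.leaf p))
    (hk' : ch[k']? = some (GTree.leaf p'))
    (hmax : ∀ c ∈ ch, ∀ q, c = GTree.leaf q → q i ≤ p' i)
    (hnonBI : p i ≠ p' i) :
    (∀ (sopp : List ℕ → ℕ) (w w' : ι → ℝ),
        Outcome (comb t i si sopp) t [] w →
        Outcome (comb t i (Function.update si adr k') sopp) t [] w' →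
        w i ≤ w' i) ∧
    (∃ (sopp : List ℕ → ℕ) (w w' : ι → ℝ),
        Outcome (comb t i si sopp) t [] w ∧
        Outcome (comb t i (Function.update si adr k') sopp) t [] w' ∧
        w i < w' i) := by
  have hmover : moverAt t adr = some i := by
    simp [moverAt, hadr]
  have hple : p i ≤ p' i :=
    hmax (GTree.leaf p) (List.mem_of_getElem? hchoice) p rfl
  have hplt : p i < p' i := lt_of_le_of_ne hple hnonBI
  constructor
  · intro sopp w w' h1 h2
    refine aux_le t i adr ch hadr (comb t i si sopp)
      (comb t i (Function.update si adr k') sopp) ?_ p p' ?_ ?_ hple t [] w h1 w' h2 (by simp [subtreeAt])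
    · intro b hb
      simp only [comb]
      by_cases hm : moverAt t b = some i
      · simp [hm, Function.update_of_ne hb]
      · simp [hm]
    · simpa [comb, hmover] using hchoice
    · simpa [comb, hmover, Function.update_self] using hk'
  · refine ⟨fun b => adr.getD b.length 0, p, p', ?_, ?_, hplt⟩
    · refine aux_reach t i adr ch p (si adr) hchoice _ ?_ ?_ adr [] t hs rfl (by simp [subtreeAt]) hadr
      · simp [comb, hmover]
      · intro b j ch0 hb hji
        simp [comb, moverAt, hb, hji]
    · refine aux_reach t i adr ch p' k' hk' _ ?_ ?_ adr [] t hs rfl (by simp [subtreeAt]) hadr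
      · simp [comb, hmover, Function.update_self]
      · intro b j ch0 hb hji
        simp [comb, moverAt, hb, hji]
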